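/- The series ∑_{n=2}^∞ n^{−3/2} (∑_{k=1}^∞ min(n, 2^{4k})/k³)^{1/2} diverges (its partial sums tend to +∞). -/

import Mathlib

open Filter Finset

noncomputable def innerF (n k : ℕ) : ℝ := (min n (2 ^ (4 * (k + 1))) : ℝ) / ((k : ℝ) + 1) ^ 3

lemma innerF_nonneg (n k : ℕ) : 0 ≤ innerF n k := by
  unfold innerF
  positivity

lemma inner_summable (n : ℕ) : Summable (fun k => innerF n k) := by
  have hg : Summable (fun k : ℕ => (n : ℝ) * (1 / ((k : ℝ) + 1) ^ 3)) := by
    apply Summable.mul_left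
    have h : Summable (fun k : ℕ => 1 / (k : ℝ) ^ 3) :=
      Real.summable_one_div_nat_pow.mpr (by norm_num)
    have h2 := (summable_nat_add_iff 1).mpr h
    simpa using h2
  refine hg.of_nonneg_of_le (fun k => innerF_nonneg n k) (fun k => ?_)
  unfold innerF
  rw [div_eq_mul_one_div]
  gcongr
  exact min_le_left _ _

lemma inner_ge (n : ℕ) (hn : 2 ≤ n) :
    (n : ℝ) / (8 * (Nat.clog 2 n : ℝ) ^ 2) ≤ ∑' k, innerF n k := by
  set K := Nat.clog 2 n with hKdef
  have hK : 1 ≤ K := Nat.clog_pos one_lt_two hn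
  have hKR : (1 : ℝ) ≤ (K : ℝ) := by exact_mod_cast hK
  have hstep : ∀ k ∈ Finset.Ico K (2 * K), (n : ℝ) / (2 * K) ^ 3 ≤ innerF n k := by
    intro k hk
    rw [Finset.mem_Ico] at hk
    have hle : n ≤ 2 ^ (4 * (k + 1)) := by
      calc n ≤ 2 ^ K := Nat.le_pow_clog one_lt_two n
        _ ≤ 2 ^ (4 * (k + 1)) := Nat.pow_le_pow_right (by norm_num) (by omega)
    have hmin : min (n : ℝ) ((2 : ℝ) ^ (4 * (k + 1))) = (n : ℝ) := by
      apply min_eq_left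
      exact_mod_cast hle
    unfold innerF
    push_cast
    rw [hmin]
    apply div_le_div_of_nonneg_left _ (by positivity) _
    · exact_mod_cast Nat.zero_le n
    · have hk1 : (k : ℝ) + 1 ≤ 2 * (K : ℝ) := by exact_mod_cast hk.2
      exact pow_le_pow_left₀ (by positivity) hk1 3
  have hcard : (Finset.Ico K (2 * K)).card = K := by
    rw [Nat.card_Ico]; omega
  have hsum : (K : ℝ) * ((n : ℝ) / (2 * K) ^ 3) ≤ ∑ k ∈ Finset.Ico K (2 * K), innerF n k := by
    have h := Finset.card_nsmul_le_sum (Finset.Ico K (2 * K)) (innerF n)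
      ((n : ℝ) / (2 * K) ^ 3) hstep
    rw [hcard] at h
    simpa [nsmul_eq_mul] using h
  have htsum : ∑ k ∈ Finset.Ico K (2 * K), innerF n k ≤ ∑' k, innerF n k :=
    Summable.sum_le_tsum _ (fun k _ => innerF_nonneg n k) (inner_summable n)
  have heq : (n : ℝ) / (8 * (K : ℝ) ^ 2) = (K : ℝ) * ((n : ℝ) / (2 * K) ^ 3) := by
    have hK0 : (K : ℝ) ≠ 0 := by positivity
    field_simp
    ring
  rw [heq]
  exact le_trans hsum htsum


noncomputable def gfun (n : ℕ) : ℝ := 1 / (Real.sqrt 8 * n * Nat.clog 2 n)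

lemma term_ge (n : ℕ) (hn : 2 ≤ n) :
    gfun n ≤ (n : ℝ) ^ (-(3 : ℝ) / 2) * Real.sqrt (∑' k, innerF n k) := by
  set K := Nat.clog 2 n with hKdef
  have hK : 1 ≤ K := Nat.clog_pos one_lt_two hn
  have hKpos : (0 : ℝ) < K := by exact_mod_cast hK
  have hnpos : (0 : ℝ) < n := by exact_mod_cast (by omega : 0 < n)
  have h8 : (0 : ℝ) < Real.sqrt 8 := Real.sqrt_pos.mpr (by norm_num)
  have h1 : Real.sqrt ((n : ℝ) / (8 * (K : ℝ) ^ 2)) ≤ Real.sqrt (∑' k, innerF n k) :=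
    Real.sqrt_le_sqrt (inner_ge n hn)
  have h2 : Real.sqrt ((n : ℝ) / (8 * (K : ℝ) ^ 2)) = Real.sqrt n / (Real.sqrt 8 * K) := by
    rw [Real.sqrt_div hnpos.le, Real.sqrt_mul (by norm_num : (0:ℝ) ≤ 8), Real.sqrt_sq hKpos.le]
  have h3 : (n : ℝ) ^ (-(3 : ℝ) / 2) * Real.sqrt n = (n : ℝ)⁻¹ := by
    rw [Real.sqrt_eq_rpow, ← Real.rpow_add hnpos,
      show -(3 : ℝ) / 2 + 1 / 2 = -1 by norm_num, Real.rpow_neg_one]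
  have key : (n : ℝ) ^ (-(3 : ℝ) / 2) * (Real.sqrt n / (Real.sqrt 8 * K)) = gfun n := by
    rw [← mul_div_assoc, h3]
    unfold gfun
    rw [inv_eq_one_div, div_div, one_div, one_div]
    congr 1
    ring
  have h4 : Real.sqrt n / (Real.sqrt 8 * K) ≤ Real.sqrt (∑' k, innerF n k) := h2 ▸ h1
  calc gfun n = (n : ℝ) ^ (-(3 : ℝ) / 2) * (Real.sqrt n / (Real.sqrt 8 * K)) := key.symm
    _ ≤ (n : ℝ) ^ (-(3 : ℝ) / 2) * Real.sqrt (∑' k, innerF n k) :=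
        mul_le_mul_of_nonneg_left h4 (by positivity)

lemma gsum_lb (M : ℕ) :
    ∑ j ∈ Finset.range M, 1 / (2 * Real.sqrt 8 * ((j : ℝ) + 2)) ≤
      ∑ n ∈ Finset.Icc 2 (2 ^ M), gfun n := by
  induction M with
  | zero =>
    rw [Finset.range_zero, Finset.sum_empty, pow_zero,
      Finset.Icc_eq_empty (by norm_num), Finset.sum_empty]
  | succ M ih =>
    have h8 : (0 : ℝ) < Real.sqrt 8 := Real.sqrt_pos.mpr (by norm_num)
    have hsplit : ∑ n ∈ Finset.Icc 2 (2 ^ (M + 1)), gfun n =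
        (∑ n ∈ Finset.Icc 2 (2 ^ M), gfun n) +
          ∑ n ∈ Finset.Ioc (2 ^ M) (2 ^ (M + 1)), gfun n := by
      rw [show (2 : ℕ) = 1 + 1 from rfl, Finset.Icc_add_one_left_eq_Ioc, Finset.Icc_add_one_left_eq_Ioc]
      exact (Finset.sum_Ioc_consecutive _ (Nat.one_le_two_pow) (Nat.pow_le_pow_right
        (by norm_num) (Nat.le_succ M))).symm
    have hblock : ∀ n ∈ Finset.Ioc (2 ^ M) (2 ^ (M + 1)),
        1 / (Real.sqrt 8 * (2 ^ (M + 1) : ℝ) * ((M : ℝ) + 1)) ≤ gfun n := by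
      intro n hn
      rw [Finset.mem_Ioc] at hn
      have hp : 1 ≤ 2 ^ M := Nat.one_le_two_pow
      have hn2 : 2 ≤ n := by omega
      have hKle : Nat.clog 2 n ≤ M + 1 := (Nat.clog_le_iff_le_pow one_lt_two).mpr hn.2
      have hK1 : 1 ≤ Nat.clog 2 n := Nat.clog_pos one_lt_two hn2
      have h0n : (0 : ℝ) < n := by exact_mod_cast (by omega : 0 < n)
      have h0K : (0 : ℝ) < Nat.clog 2 n := by exact_mod_cast hK1
      unfold gfun
      apply one_div_le_one_div_of_le
      · positivity
      · have e1 : (n : ℝ) ≤ (2 ^ (M + 1) : ℝ) := by exact_mod_cast hn.2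
        have e2 : (Nat.clog 2 n : ℝ) ≤ (M : ℝ) + 1 := by exact_mod_cast hKle
        exact mul_le_mul (mul_le_mul le_rfl e1 h0n.le h8.le) e2 h0K.le (by positivity)
    have hcard : (Finset.Ioc (2 ^ M) (2 ^ (M + 1))).card = 2 ^ M := by
      rw [Nat.card_Ioc, pow_succ]
      omega
    have hblocksum : (2 ^ M : ℝ) * (1 / (Real.sqrt 8 * (2 ^ (M + 1) : ℝ) * ((M : ℝ) + 1))) ≤
        ∑ n ∈ Finset.Ioc (2 ^ M) (2 ^ (M + 1)), gfun n := by
      have h := Finset.card_nsmul_le_sum (Finset.Ioc (2 ^ M) (2 ^ (M + 1))) gfun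
        (1 / (Real.sqrt 8 * (2 ^ (M + 1) : ℝ) * ((M : ℝ) + 1))) hblock
      rw [hcard] at h
      simpa [nsmul_eq_mul] using h
    have hbterm : 1 / (2 * Real.sqrt 8 * ((M : ℝ) + 2)) ≤
        (2 ^ M : ℝ) * (1 / (Real.sqrt 8 * (2 ^ (M + 1) : ℝ) * ((M : ℝ) + 1))) := by
      rw [mul_one_div, div_le_div_iff₀ (by positivity) (by positivity)]
      have hpow : ((2 : ℝ) ^ (M + 1)) = 2 * 2 ^ M := by ring
      rw [hpow]
      have hpos : (0 : ℝ) ≤ (2 : ℝ) ^ M * Real.sqrt 8 := by positivity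
      nlinarith [hpos]
    rw [hsplit, Finset.sum_range_succ]
    push_cast
    exact add_le_add ih (le_trans hbterm hblocksum)
/-- The series `∑_{n=2}^∞ n^{-3/2} (∑_{k=1}^∞ min(n, 2^{4k})/k³)^{1/2}` diverges:
its partial sums tend to `+∞`. -/
theorem stmt_16 :
    Tendsto (fun m : ℕ =>
        ∑ n ∈ Finset.Icc 2 m, (n : ℝ) ^ (-(3 : ℝ) / 2) *
          Real.sqrt (∑' k : ℕ, (min n (2 ^ (4 * (k + 1))) : ℝ) / ((k : ℝ) + 1) ^ 3))
      atTop atTop := by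
  have hmono : Monotone (fun m : ℕ =>
      ∑ n ∈ Finset.Icc 2 m, (n : ℝ) ^ (-(3 : ℝ) / 2) *
        Real.sqrt (∑' k : ℕ, (min n (2 ^ (4 * (k + 1))) : ℝ) / ((k : ℝ) + 1) ^ 3)) := by
    intro a b hab
    apply Finset.sum_le_sum_of_subset_of_nonneg (Finset.Icc_subset_Icc_right hab)
    intro i _ _
    positivity
  have hlow : ∀ M : ℕ, ∑ j ∈ Finset.range M, 1 / (2 * Real.sqrt 8 * ((j : ℝ) + 2)) ≤
      ∑ n ∈ Finset.Icc (2 : ℕ) (2 ^ M), (n : ℝ) ^ (-(3 : ℝ) / 2) *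
        Real.sqrt (∑' k : ℕ, (min n (2 ^ (4 * (k + 1))) : ℝ) / ((k : ℝ) + 1) ^ 3) := by
    intro M
    refine le_trans (gsum_lb M) (Finset.sum_le_sum fun n hn => ?_)
    have hn2 : 2 ≤ n := (Finset.mem_Icc.mp hn).1
    have := term_ge n hn2
    simpa [innerF] using this
  have hdiv : Tendsto (fun M : ℕ =>
      ∑ j ∈ Finset.range M, 1 / (2 * Real.sqrt 8 * ((j : ℝ) + 2))) atTop atTop := by
    have h8 : (0 : ℝ) < 1 / (2 * Real.sqrt 8) := by positivity
    have h1 : Tendsto (fun M : ℕ => ∑ j ∈ Finset.range M, 1 / ((j : ℝ) + 2)) atTop atTop := by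
      have h0 := Real.tendsto_sum_range_one_div_nat_succ_atTop
      have h2 := h0.comp (tendsto_add_atTop_nat 1)
      have h3 : ∀ M : ℕ, (fun n => ∑ i ∈ Finset.range n, (1 / ((i : ℝ) + 1)))
          ((fun a => a + 1) M) = (∑ j ∈ Finset.range M, 1 / ((j : ℝ) + 2)) + 1 := by
        intro M
        simp only [Finset.sum_range_succ']
        push_cast
        norm_num
        exact Finset.sum_congr rfl fun x _ => by ring_nf
      have h4 : Tendsto (fun M : ℕ => (∑ j ∈ Finset.range M, 1 / ((j : ℝ) + 2)) + 1)
          atTop atTop := by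
        rw [show (fun M : ℕ => (∑ j ∈ Finset.range M, 1 / ((j : ℝ) + 2)) + 1) =
            (fun n => ∑ i ∈ Finset.range n, (1 / ((i : ℝ) + 1))) ∘ (fun a => a + 1) from
          funext fun M => (h3 M).symm]
        exact h2
      have h5 := tendsto_atTop_add_const_right atTop (-1) h4
      simpa using h5
    have h6 := Tendsto.const_mul_atTop h8 h1
    refine h6.congr fun M => ?_
    rw [Finset.mul_sum]
    exact Finset.sum_congr rfl fun j _ => one_div_mul_one_div _ _
  exact tendsto_atTop_of_monotone_of_subseq (φ := fun M : ℕ => 2 ^ M) (l := atTop) hmono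
    (tendsto_atTop_mono hlow hdiv)
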